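/- Suppose ψ : U ⊗ V → W is the SL₃-equivariant projection with U = V(e,0) = Sym^e(ℂ³), V = V(0,f) = Sym^f((ℂ³)^∨), e ≤ f, and W a direct sum of Cartan pieces V(e−i₁, f−i₁) ⊕ … ⊕ V(e−i_m, f−i_m). Then there exists a homogeneous polynomial χ ∈ ℚ[x,y] of degree e such that for all u, q ∈ ℂ³ and v, p ∈ (ℂ³)^∨: ψ(u^e ⊗ v^f)(p,q) = v(q)^{f−e}·χ(δ(p,q)·v(u), u(p)·v(q)), where δ(p,q) = Σᵢ p(eᵢ)xᵢ(q). -/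
import Mathlib


open MvPolynomial
/-- The contraction operator Δ = Σᵢ ∂/∂eᵢ ⊗ ∂/∂xᵢ on bihomogeneous polynomials,
where the `Sum.inl` variables are the eᵢ's and the `Sum.inr` variables are the xᵢ's. -/
noncomputable def Delta (P : MvPolynomial (Fin 3 ⊕ Fin 3) ℂ) : MvPolynomial (Fin 3 ⊕ Fin 3) ℂ :=
  ∑ i : Fin 3, pderiv (Sum.inl i) (pderiv (Sum.inr i) P)

/-- The linear form corresponding to u ∈ ℂ³, in the first set of variables. -/
noncomputable def linU (u : Fin 3 → ℂ) : MvPolynomial (Fin 3 ⊕ Fin 3) ℂ :=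
  ∑ i : Fin 3, C (u i) * X (Sum.inl i)

/-- The linear form corresponding to v ∈ (ℂ³)^∨, in the second set of variables. -/
noncomputable def linV (v : Fin 3 → ℂ) : MvPolynomial (Fin 3 ⊕ Fin 3) ℂ :=
  ∑ i : Fin 3, C (v i) * X (Sum.inr i)


/-- The element Σᵢ eᵢ ⊗ xᵢ; multiplication by it is the raising operator δ. -/
noncomputable def deltaElem : MvPolynomial (Fin 3 ⊕ Fin 3) ℂ :=
  ∑ i : Fin 3, X (Sum.inl i) * X (Sum.inr i)

lemma pderiv_linU_inl (u : Fin 3 → ℂ) (i : Fin 3) :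
    pderiv (Sum.inl i) (linU u) = C (u i) := by
  simp [linU, pderiv_C_mul, Finset.sum_eq_single i, Pi.single_apply, Sum.inl.injEq]

lemma pderiv_linU_inr (u : Fin 3 → ℂ) (i : Fin 3) :
    pderiv (Sum.inr i) (linU u) = 0 := by
  simp [linU, pderiv_C_mul]

lemma pderiv_linV_inr (v : Fin 3 → ℂ) (i : Fin 3) :
    pderiv (Sum.inr i) (linV v) = C (v i) := by
  simp [linV, pderiv_C_mul, Finset.sum_eq_single i, Pi.single_apply, Sum.inr.injEq]

lemma pderiv_linV_inl (v : Fin 3 → ℂ) (i : Fin 3) :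
    pderiv (Sum.inl i) (linV v) = 0 := by
  simp [linV, pderiv_C_mul]

lemma castC (n : ℕ) : ((n : ℕ) : MvPolynomial (Fin 3 ⊕ Fin 3) ℂ) = C (n : ℂ) :=
  (map_natCast (C : ℂ →+* MvPolynomial (Fin 3 ⊕ Fin 3) ℂ) n).symm

lemma Delta_powers (u v : Fin 3 → ℂ) (a b : ℕ) :
    Delta (linU u ^ a * linV v ^ b) =
      C ((a : ℂ) * b * ∑ i, u i * v i) * (linU u ^ (a-1) * linV v ^ (b-1)) := by
  unfold Delta
  have h1 : ∀ i : Fin 3, pderiv (Sum.inr i) (linU u ^ a * linV v ^ b)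
      = linU u ^ a * ((b : MvPolynomial _ ℂ) * linV v ^ (b-1) * C (v i)) := by
    intro i
    rw [pderiv_mul, pderiv_pow, pderiv_pow, pderiv_linU_inr, pderiv_linV_inr]
    ring
  have h2 : ∀ i : Fin 3, pderiv (Sum.inl i) (linU u ^ a * ((b : MvPolynomial _ ℂ) * linV v ^ (b-1) * C (v i)))
      = ((a : MvPolynomial _ ℂ) * linU u ^ (a-1) * C (u i)) * ((b : MvPolynomial _ ℂ) * linV v ^ (b-1) * C (v i)) := by
    intro i
    rw [pderiv_mul, pderiv_pow, pderiv_linU_inl]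
    have : pderiv (Sum.inl i) ((b : MvPolynomial (Fin 3 ⊕ Fin 3) ℂ) * linV v ^ (b-1) * C (v i)) = 0 := by
      rw [pderiv_mul, pderiv_mul, pderiv_pow, pderiv_linV_inl, pderiv_C]
      rw [castC, pderiv_C]
      simp
    rw [this]; ring
  simp_rw [h1, h2, castC]
  have : ∀ x : Fin 3, C (a:ℂ) * linU u ^ (a-1) * C (u x) * (C (b:ℂ) * linV v ^ (b-1) * C (v x))
      = (C (a:ℂ) * C (b:ℂ) * (linU u ^ (a-1) * linV v ^ (b-1))) * C (u x * v x) := by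
    intro x; rw [C_mul]; ring
  simp_rw [this]
  rw [← Finset.mul_sum, ← map_sum, C_mul, C_mul]
  ring

lemma Delta_C_mul (a : ℂ) (P : MvPolynomial (Fin 3 ⊕ Fin 3) ℂ) :
    Delta (C a * P) = C a * Delta P := by
  unfold Delta
  simp [pderiv_C_mul, Finset.mul_sum]

lemma Delta_iter (u v : Fin 3 → ℂ) (e f : ℕ) (hef : e ≤ f) :
    ∀ j, j ≤ e → Delta^[j] (linU u ^ e * linV v ^ f) =
      C ((e.descFactorial j : ℂ) * (f.descFactorial j : ℂ) * (∑ i, u i * v i) ^ j) *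
        (linU u ^ (e - j) * linV v ^ (f - j)) := by
  intro j
  induction j with
  | zero => intro _; simp
  | succ j ih =>
    intro hj
    rw [Function.iterate_succ_apply', ih (Nat.le_of_succ_le hj), Delta_C_mul, Delta_powers,
      ← mul_assoc, ← C_mul]
    have h1 : e - (j + 1) = e - j - 1 := by omega
    have h2 : f - (j + 1) = f - j - 1 := by omega
    rw [h1, h2]
    congr 1
    have hje : (((e - j : ℕ)) : ℂ) = (e : ℂ) - j := by
      push_cast [Nat.cast_sub (Nat.le_of_succ_le hj)]; ring
    have hjf : (((f - j : ℕ)) : ℂ) = (f : ℂ) - j := by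
      push_cast [Nat.cast_sub (le_trans (Nat.le_of_succ_le hj) hef)]; ring
    rw [Nat.descFactorial_succ, Nat.descFactorial_succ, pow_succ]
    push_cast [hje, hjf]
    ring

lemma eval_linU (p q u : Fin 3 → ℂ) :
    eval (Sum.elim p q) (linU u) = ∑ i, u i * p i := by
  simp [linU]

lemma eval_linV (p q v : Fin 3 → ℂ) :
    eval (Sum.elim p q) (linV v) = ∑ i, v i * q i := by
  simp [linV]

lemma eval_deltaElem (p q : Fin 3 → ℂ) :
    eval (Sum.elim p q) deltaElem = ∑ i, p i * q i := by
  simp [deltaElem]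

/-- Corollary 2.8: if ψ is a sum of equivariant projections, hence a ℚ-linear combination
Σⱼ cⱼ δʲΔʲ, then there is a homogeneous polynomial χ ∈ ℚ[x,y] of degree e such that
ψ(u^e ⊗ v^f)(p,q) = v(q)^{f−e}·χ(δ(p,q)·v(u), u(p)·v(q)) for all u, v, p, q. -/
theorem stmt19 (e f : ℕ) (hef : e ≤ f) (c : ℕ → ℚ)
    (ψ : MvPolynomial (Fin 3 ⊕ Fin 3) ℂ → MvPolynomial (Fin 3 ⊕ Fin 3) ℂ)
    (hψ : ∀ P, ψ P = ∑ j ∈ Finset.range (e + 1), (c j : ℂ) • (deltaElem ^ j * Delta^[j] P)) :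
    ∃ χ : MvPolynomial (Fin 2) ℚ, χ.IsHomogeneous e ∧
      ∀ (u q : Fin 3 → ℂ) (v p : Fin 3 → ℂ),
        eval (Sum.elim p q) (ψ (linU u ^ e * linV v ^ f)) =
          (∑ i, v i * q i) ^ (f - e) *
            aeval ![(∑ i, p i * q i) * (∑ i, v i * u i),
                    (∑ i, u i * p i) * (∑ i, v i * q i)] χ := by
  refine ⟨∑ j ∈ Finset.range (e + 1),
    C (c j * e.descFactorial j * f.descFactorial j) * (X 0 ^ j * X 1 ^ (e - j)), ?_, ?_⟩
  · apply IsHomogeneous.sum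
    intro j hj
    have hj' : j ≤ e := Nat.lt_succ_iff.mp (Finset.mem_range.mp hj)
    have h := (isHomogeneous_C (Fin 2) (c j * (e.descFactorial j : ℚ) * f.descFactorial j)).mul
      (((isHomogeneous_X ℚ (0 : Fin 2)).pow j).mul ((isHomogeneous_X ℚ (1 : Fin 2)).pow (e - j)))
    have : 0 + (1 * j + 1 * (e - j)) = e := by omega
    rwa [this] at h
  · intro u q v p
    rw [hψ, map_sum, map_sum, Finset.mul_sum]
    apply Finset.sum_congr rfl
    intro j hj
    have hj' : j ≤ e := Nat.lt_succ_iff.mp (Finset.mem_range.mp hj)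
    rw [Delta_iter u v e f hef j hj', smul_eq_C_mul]
    simp only [eval_mul, eval_pow, eval_C, eval_deltaElem, eval_linU, eval_linV,
      map_mul, map_pow, aeval_C, aeval_X, Matrix.cons_val_zero, Matrix.cons_val_one,
      Matrix.head_cons]
    have huv : (∑ i, v i * u i) = ∑ i, u i * v i := by
      apply Finset.sum_congr rfl; intros; ring
    have hvq : ((∑ i, v i * q i)) ^ (f - j) =
        (∑ i, v i * q i) ^ (f - e) * (∑ i, v i * q i) ^ (e - j) := by
      rw [← pow_add]; congr 1; omega
    rw [huv, hvq]
    push_cast [eq_ratCast]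
    ring
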